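/- Let r ≥ 1 be a fixed integer. For a permutation σ of {1, …, n}, say position i is a left-to-right maximum if σ(i) > σ(j) for all j < i; if the positions of the left-to-right maxima are i_1 < ⋯ < i_m, define P_r(σ) = i_{m-r+1} when m ≥ r and P_r(σ) = 0 otherwise. Then the average (1/n!)·Σ_{σ ∈ S_n} P_r(σ) equals n/2^r + o(n) as n → ∞; that is, (1/(n·n!))·Σ_{σ ∈ S_n} P_r(σ) → 2^{-r}. -/

import Mathlib

open Filter

/-- The set of positions of the strict left-to-right maxima of a permutation
`σ` of `Fin n` (positions are elements of `Fin n`). -/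
def permLRMaxSet {n : ℕ} (σ : Equiv.Perm (Fin n)) : Finset (Fin n) :=
  Finset.univ.filter fun i => ∀ j, j < i → σ j < σ i

/-- `P_r(σ)`: the 1-based position of the `r`-th left-to-right maximum of `σ`
counted from the right (its position among `{1,…,n}`), if `σ` has at least `r`
left-to-right maxima, and `0` otherwise. -/
def rthLRMaxPosFromRight (r : ℕ) {n : ℕ} (σ : Equiv.Perm (Fin n)) : ℕ :=
  if r ≤ (permLRMaxSet σ).card then
    (((permLRMaxSet σ).sort (· ≤ ·)).map (fun i => (i : ℕ) + 1)).getD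
      ((permLRMaxSet σ).card - r) 0
  else 0

/-- r-th from the right element of S (1-based value +1), or 0. -/
def Qfun (r : ℕ) (S : Finset ℕ) : ℕ :=
  if r ≤ S.card then ((S.sort (· ≤ ·)).map (· + 1)).getD (S.card - r) 0 else 0

def Nset {n : ℕ} (σ : Equiv.Perm (Fin n)) : Finset ℕ :=
  (permLRMaxSet σ).image Fin.val

lemma Qfun_zero_of_empty (r : ℕ) (hr : 1 ≤ r) : Qfun r (∅ : Finset ℕ) = 0 := by
  simp [Qfun]

lemma sort_insert_max {S : Finset ℕ} {p : ℕ} (h : ∀ x ∈ S, x < p) :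
    (insert p S).sort (· ≤ ·) = S.sort (· ≤ ·) ++ [p] := by
  have hp : p ∉ S := fun hmem => lt_irrefl p (h p hmem)
  apply fun h1 h2 h3 => List.Perm.eq_of_pairwise' (r := (· ≤ · : ℕ → ℕ → Prop)) h2 h3 h1
  · rw [← Multiset.coe_eq_coe]
    rw [← Multiset.coe_add, Finset.sort_eq, Finset.insert_val, Finset.sort_eq,
      Multiset.ndinsert_of_notMem hp]
    rw [← Multiset.singleton_add, add_comm, Multiset.coe_singleton]
  · exact Finset.pairwise_sort _ _
  · rw [List.pairwise_append]
    refine ⟨Finset.pairwise_sort _ _, List.pairwise_singleton _ p, ?_⟩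
    intro a ha b hb
    rw [List.mem_singleton] at hb
    subst hb
    exact le_of_lt (h a ((Finset.mem_sort _).mp ha))

lemma Qfun_one_insert_max {S : Finset ℕ} {p : ℕ} (h : ∀ x ∈ S, x < p) :
    Qfun 1 (insert p S) = p + 1 := by
  have hp : p ∉ S := fun hmem => lt_irrefl p (h p hmem)
  have hc : (insert p S).card = S.card + 1 := Finset.card_insert_of_notMem hp
  rw [Qfun, if_pos (by omega), hc, sort_insert_max h]
  rw [List.map_append]
  rw [List.getD_append_right _ _ _ _ (by simp)]
  simp

lemma Qfun_succ_insert_max {S : Finset ℕ} {p : ℕ} (h : ∀ x ∈ S, x < p) (r : ℕ) (hr : 1 ≤ r) :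
    Qfun (r + 1) (insert p S) = Qfun r S := by
  have hp : p ∉ S := fun hmem => lt_irrefl p (h p hmem)
  have hc : (insert p S).card = S.card + 1 := Finset.card_insert_of_notMem hp
  rw [Qfun, Qfun, hc]
  by_cases hrc : r ≤ S.card
  · rw [if_pos (by omega), if_pos hrc, sort_insert_max h, List.map_append]
    rw [List.getD_append _ _ _ _ (by rw [List.length_map, Finset.length_sort]; omega)]
    congr 1
    omega
  · rw [if_neg (by omega), if_neg hrc]

lemma sort_image {n : ℕ} (S : Finset (Fin n)) :
    (S.image Fin.val).sort (· ≤ ·) = (S.sort (· ≤ ·)).map Fin.val := by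
  rw [← Finset.sort_val, ← Finset.sort_val, Finset.image_val_of_injOn (Fin.val_injective.injOn),
    Multiset.map_sort (r := (· ≤ · : Fin n → Fin n → Prop)) (r' := (· ≤ · : ℕ → ℕ → Prop))]
  intro a _ b _
  exact Iff.rfl

lemma rth_eq_Qfun (r : ℕ) {n : ℕ} (σ : Equiv.Perm (Fin n)) :
    rthLRMaxPosFromRight r σ = Qfun r (Nset σ) := by
  have hc : (Nset σ).card = (permLRMaxSet σ).card :=
    Finset.card_image_of_injective _ Fin.val_injective
  rw [rthLRMaxPosFromRight, Qfun, hc, Nset, sort_image,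
    show ((Finset.sort (permLRMaxSet σ) (fun x1 x2 => x1 ≤ x2)) >>= fun a => pure ((a : ℕ)))
        = ((permLRMaxSet σ).sort (· ≤ ·)).map Fin.val
      from List.flatMap_pure_eq_map _ _,
    List.map_map]

/-- insert the max value at position k -/
def insPerm {m : ℕ} (k : Fin (m+1)) (τ : Equiv.Perm (Fin m)) : Equiv.Perm (Fin (m+1)) :=
  (finSuccEquiv' k).trans ((Equiv.optionCongr τ).trans (finSuccEquiv' (Fin.last m)).symm)

lemma insPerm_at {m : ℕ} (k : Fin (m+1)) (τ : Equiv.Perm (Fin m)) :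
    insPerm k τ k = Fin.last m := by
  simp [insPerm]

lemma insPerm_succAbove {m : ℕ} (k : Fin (m+1)) (τ : Equiv.Perm (Fin m)) (p : Fin m) :
    insPerm k τ (k.succAbove p) = (τ p).castSucc := by
  simp [insPerm, finSuccEquiv'_succAbove, Fin.succAbove_last]

lemma insPerm_ne_last {m : ℕ} (k : Fin (m+1)) (τ : Equiv.Perm (Fin m)) {j : Fin (m+1)}
    (hj : j ≠ k) : insPerm k τ j < Fin.last m := by
  obtain ⟨p, hp⟩ := Fin.exists_succAbove_eq hj
  rw [← hp, insPerm_succAbove]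
  exact Fin.castSucc_lt_last _

lemma insPerm_bijective (m : ℕ) :
    Function.Bijective (fun kτ : Fin (m+1) × Equiv.Perm (Fin m) => insPerm kτ.1 kτ.2) := by
  rw [Fintype.bijective_iff_injective_and_card]
  constructor
  · rintro ⟨k, τ⟩ ⟨k', τ'⟩ h
    simp only at h
    have hk : k = k' := by
      by_contra hne
      have h1 : insPerm k' τ' k = Fin.last m := by rw [← h, insPerm_at]
      exact absurd h1 (ne_of_lt (insPerm_ne_last k' τ' hne))
    subst hk
    have hτ : τ = τ' := by
      apply Equiv.ext
      intro p
      have h2 : insPerm k τ (k.succAbove p) = insPerm k τ' (k.succAbove p) := by rw [h]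
      rw [insPerm_succAbove, insPerm_succAbove] at h2
      exact Fin.castSucc_injective _ h2
    rw [hτ]
  · simp [Fintype.card_perm, Nat.factorial_succ]

lemma mem_permLRMax_insPerm {m : ℕ} (k : Fin (m+1)) (τ : Equiv.Perm (Fin m))
    (i : Fin (m+1)) :
    i ∈ permLRMaxSet (insPerm k τ) ↔
      i = k ∨ (i < k ∧ ∃ p : Fin m, p.castSucc = i ∧ p ∈ permLRMaxSet τ) := by
  simp only [permLRMaxSet, Finset.mem_filter, Finset.mem_univ, true_and]
  rcases lt_trichotomy i k with hik | hik | hik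
  · -- i < k
    have hilast : i < Fin.last m := lt_of_lt_of_le hik (Fin.le_last k)
    set p : Fin m := i.castPred (ne_of_lt hilast) with hp
    have hpi : p.castSucc = i := Fin.castSucc_castPred i (ne_of_lt hilast)
    have hval : insPerm k τ i = (τ p).castSucc := by
      rw [← hpi, ← Fin.succAbove_of_castSucc_lt k p (hpi ▸ hik), insPerm_succAbove]
    constructor
    · intro hmem
      refine Or.inr ⟨hik, p, hpi, ?_⟩
      intro q hq
      have hq' : q.castSucc < i := by
        rw [← hpi]; exact Fin.castSucc_lt_castSucc_iff.mpr hq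
      have := hmem q.castSucc hq'
      rw [hval] at this
      have hqval : insPerm k τ q.castSucc = (τ q).castSucc := by
        rw [← Fin.succAbove_of_castSucc_lt k q (lt_trans hq' hik), insPerm_succAbove]
      rw [hqval] at this
      exact Fin.castSucc_lt_castSucc_iff.mp this
    · rintro (rfl | ⟨-, p', hp', hmem⟩)
      · exact absurd hik (lt_irrefl _)
      · have hpp : p' = p := by
          apply Fin.castSucc_injective
          rw [hp', hpi]
        subst hpp
        intro j hj
        have hjlast : j < Fin.last m := lt_of_lt_of_le (lt_trans hj hik) (Fin.le_last k)
        set q : Fin m := j.castPred (ne_of_lt hjlast) with hq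
        have hqj : q.castSucc = j := Fin.castSucc_castPred j (ne_of_lt hjlast)
        have hjval : insPerm k τ j = (τ q).castSucc := by
          rw [← hqj, ← Fin.succAbove_of_castSucc_lt k q (hqj ▸ lt_trans hj hik),
            insPerm_succAbove]
        rw [hjval, hval]
        rw [Fin.castSucc_lt_castSucc_iff]
        apply hmem
        rw [← Fin.castSucc_lt_castSucc_iff, hqj, hpi]
        exact hj
  · -- i = k
    subst hik
    constructor
    · intro _; exact Or.inl rfl
    · intro _
      intro j hj
      rw [insPerm_at]
      exact insPerm_ne_last i τ (ne_of_lt hj)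
  · -- k < i
    constructor
    · intro hmem
      have := hmem k hik
      rw [insPerm_at] at this
      exact absurd this (not_lt.mpr (Fin.le_last _))
    · rintro (rfl | ⟨hlt, -⟩)
      · exact absurd hik (lt_irrefl _)
      · exact absurd hik (not_lt.mpr (le_of_lt hlt))

lemma Nset_insPerm {m : ℕ} (k : Fin (m+1)) (τ : Equiv.Perm (Fin m)) :
    Nset (insPerm k τ) = insert (k : ℕ) ((Nset τ).filter (· < (k : ℕ))) := by
  ext x
  simp only [Nset, Finset.mem_image, Finset.mem_insert, Finset.mem_filter]
  constructor
  · rintro ⟨i, hi, rfl⟩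
    rw [mem_permLRMax_insPerm] at hi
    rcases hi with rfl | ⟨hik, p, hpi, hp⟩
    · exact Or.inl rfl
    · refine Or.inr ⟨⟨p, hp, ?_⟩, ?_⟩
      · rw [← hpi]; rfl
      · exact hik
  · rintro (rfl | ⟨⟨p, hp, rfl⟩, hpk⟩)
    · exact ⟨k, by rw [mem_permLRMax_insPerm]; exact Or.inl rfl, rfl⟩
    · refine ⟨p.castSucc, ?_, rfl⟩
      rw [mem_permLRMax_insPerm]
      exact Or.inr ⟨hpk, p, rfl, hp⟩

noncomputable def delta : ℕ → ℕ → ℝ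
  | 0, k => if k = 0 then 0 else ((k : ℝ) + 1) / 2
  | (s+1), k => (∑ p ∈ Finset.range k, delta s p) / k

lemma delta_zero (s : ℕ) : delta s 0 = 0 := by
  cases s <;> simp [delta]

noncomputable def dval : ℕ → ℕ → ℝ
  | 0, j => (j : ℝ) + 1
  | (s+1), j => delta s j

lemma sum_dval (r K : ℕ) : ∑ j ∈ Finset.range K, dval r j = K * delta r K := by
  cases r with
  | zero =>
    induction K with
    | zero => simp [delta]
    | succ n ihn =>
      rw [Finset.sum_range_succ, ihn]
      rcases Nat.eq_zero_or_pos n with rfl | hn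
      · simp [delta, dval]
      · have h1 : delta 0 n = ((n : ℝ) + 1) / 2 := by
          rw [delta]; rw [if_neg (by omega)]
        have h2 : delta 0 (n + 1) = ((n : ℝ) + 1 + 1) / 2 := by
          rw [delta]; rw [if_neg (by omega)]; push_cast; ring_nf
        rw [h1, h2, dval]
        push_cast
        ring
  | succ s =>
    rcases Nat.eq_zero_or_pos K with rfl | hK
    · simp
    · have : delta (s + 1) K = (∑ p ∈ Finset.range K, delta s p) / K := rfl
      rw [this, mul_div_cancel₀]
      · rfl
      · exact Nat.cast_ne_zero.mpr (by omega)

noncomputable def SQ (m k r : ℕ) : ℝ :=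
  ∑ τ : Equiv.Perm (Fin m), (Qfun r ((Nset τ).filter (· < k)) : ℝ)

lemma sum_perm_decomp (m : ℕ) (f : Equiv.Perm (Fin (m+1)) → ℝ) :
    ∑ σ : Equiv.Perm (Fin (m+1)), f σ
      = ∑ j : Fin (m+1), ∑ τ : Equiv.Perm (Fin m), f (insPerm j τ) := by
  calc ∑ σ : Equiv.Perm (Fin (m+1)), f σ
      = ∑ kτ : Fin (m+1) × Equiv.Perm (Fin m), f (insPerm kτ.1 kτ.2) :=
        (Fintype.sum_bijective _ (insPerm_bijective m) _ _ (fun _ => rfl)).symm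
    _ = ∑ j : Fin (m+1), ∑ τ : Equiv.Perm (Fin m), f (insPerm j τ) := by rw [Fintype.sum_prod_type]

lemma SQ_eq (m : ℕ) : ∀ k r : ℕ, SQ m k (r + 1) = m.factorial * delta r (min k m) := by
  induction m with
  | zero =>
    intro k r
    have hP : ∀ τ : Equiv.Perm (Fin 0), (Nset τ).filter (· < k) = ∅ := by
      intro τ
      have : permLRMaxSet τ = ∅ := Finset.eq_empty_of_isEmpty _
      simp [Nset, this]
    simp [SQ, hP, Qfun_zero_of_empty _ (Nat.le_add_left 1 r), Nat.min_zero, delta_zero]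
  | succ m ih =>
    intro k r
    rw [SQ, sum_perm_decomp]
    have step : ∀ j : Fin (m+1),
        (∑ τ : Equiv.Perm (Fin m), (Qfun (r+1) ((Nset (insPerm j τ)).filter (· < k)) : ℝ))
          = if (j : ℕ) < k then (m.factorial : ℝ) * dval r j
            else (m.factorial : ℝ) * delta r (min k m) := by
      intro j
      by_cases hj : (j : ℕ) < k
      · rw [if_pos hj]
        have harg : ∀ τ : Equiv.Perm (Fin m),
            (Nset (insPerm j τ)).filter (· < k)
              = insert (j : ℕ) ((Nset τ).filter (· < (j : ℕ))) := by
          intro τ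
          rw [Nset_insPerm, Finset.filter_insert, if_pos hj, Finset.filter_filter]
          congr 1
          apply Finset.filter_congr
          intro x _
          exact ⟨fun h => h.1, fun h => ⟨h, h.trans hj⟩⟩
        have hlt : ∀ τ : Equiv.Perm (Fin m), ∀ x ∈ (Nset τ).filter (· < (j : ℕ)), x < (j : ℕ) :=
          fun τ x hx => (Finset.mem_filter.mp hx).2
        cases r with
        | zero =>
          have hq : ∀ τ : Equiv.Perm (Fin m),
              (Qfun 1 ((Nset (insPerm j τ)).filter (· < k)) : ℝ) = (j : ℝ) + 1 := by
            intro τ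
            rw [harg τ, Qfun_one_insert_max (hlt τ)]
            push_cast
            ring
          rw [Finset.sum_congr rfl (fun τ _ => hq τ), Finset.sum_const, Finset.card_univ,
            Fintype.card_perm]
          simp only [nsmul_eq_mul, dval, Fintype.card_fin]
        | succ s =>
          have hq : ∀ τ : Equiv.Perm (Fin m),
              (Qfun (s + 1 + 1) ((Nset (insPerm j τ)).filter (· < k)) : ℝ)
                = (Qfun (s + 1) ((Nset τ).filter (· < (j : ℕ))) : ℝ) := by
            intro τ
            rw [harg τ, Qfun_succ_insert_max (hlt τ) (s + 1) (Nat.le_add_left 1 s)]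
          rw [Finset.sum_congr rfl (fun τ _ => hq τ)]
          have := ih (j : ℕ) s
          rw [SQ] at this
          rw [this, Nat.min_eq_left (Fin.is_le j)]
          rfl
      · rw [if_neg hj]
        have hkj : k ≤ (j : ℕ) := not_lt.mp hj
        have harg : ∀ τ : Equiv.Perm (Fin m),
            (Nset (insPerm j τ)).filter (· < k) = (Nset τ).filter (· < k) := by
          intro τ
          rw [Nset_insPerm, Finset.filter_insert, if_neg hj, Finset.filter_filter]
          apply Finset.filter_congr
          intro x _
          exact ⟨fun h => h.2, fun h => ⟨h.trans_le hkj, h⟩⟩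
        rw [Finset.sum_congr rfl (fun τ _ => by rw [harg τ])]
        have := ih k r
        rw [SQ] at this
        rw [this]
    rw [Finset.sum_congr rfl (fun j _ => step j)]
    rw [Fin.sum_univ_eq_sum_range
      (fun j => if j < k then (m.factorial : ℝ) * dval r j
        else (m.factorial : ℝ) * delta r (min k m))]
    rw [Finset.sum_ite]
    have hfil : (Finset.range (m+1)).filter (· < k) = Finset.range (min k (m+1)) := by
      ext x; simp [Finset.mem_filter, Finset.mem_range]; omega
    have hcard : ((Finset.range (m+1)).filter (fun j => ¬ j < k)).card
        = (m + 1) - min k (m+1) := by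
      have : (Finset.range (m+1)).filter (fun j => ¬ j < k)
          = (Finset.range (m+1)) \ (Finset.range (min k (m+1))) := by
        ext x; simp [Finset.mem_filter, Finset.mem_range, Finset.mem_sdiff]; omega
      rw [this, Finset.card_sdiff_of_subset (by
        apply Finset.range_subset_range.mpr; omega), Finset.card_range, Finset.card_range]
    set K := min k (m+1) with hK
    have hKle : K ≤ m + 1 := Nat.min_le_right _ _
    rw [hfil, Finset.sum_const, hcard, ← Finset.mul_sum, sum_dval, nsmul_eq_mul,
      Nat.cast_sub hKle]
    rcases le_or_gt k m with hkm | hkm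
    · have h1 : K = k := Nat.min_eq_left (by omega)
      have h2 : min k m = k := Nat.min_eq_left hkm
      rw [h1, h2, Nat.factorial_succ]
      push_cast
      ring
    · have h1 : K = m + 1 := Nat.min_eq_right (by omega)
      have h2 : min k m = m := Nat.min_eq_right (by omega)
      rw [h1, h2, Nat.factorial_succ]
      push_cast
      ring

lemma weighted_cesaro {b : ℕ → ℝ} {L : ℝ} (hb : Tendsto b atTop (nhds L)) :
    Tendsto (fun k : ℕ => (∑ p ∈ Finset.range k, (p : ℝ) * b p) / (k : ℝ)^2)
      atTop (nhds (L / 2)) := by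
  have hsum_id : ∀ k : ℕ, (∑ p ∈ Finset.range k, (p : ℝ)) = k * ((k : ℝ) - 1) / 2 := by
    intro k
    induction k with
    | zero => simp
    | succ n ihn =>
      rw [Finset.sum_range_succ, ihn]
      push_cast
      ring
  have hdecomp : ∀ k : ℕ, (∑ p ∈ Finset.range k, (p : ℝ) * b p) / (k : ℝ)^2
      = L * ((k : ℝ) * ((k : ℝ) - 1) / 2) / (k : ℝ)^2
        + (∑ p ∈ Finset.range k, (p : ℝ) * (b p - L)) / (k : ℝ)^2 := by
    intro k
    rw [← add_div, ← hsum_id k, Finset.mul_sum, ← Finset.sum_add_distrib]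
    congr 1
    apply Finset.sum_congr rfl
    intro p _
    ring
  have hT1 : Tendsto (fun k : ℕ => L * ((k : ℝ) * ((k : ℝ) - 1) / 2) / (k : ℝ)^2)
      atTop (nhds (L / 2)) := by
    have heq : ∀ᶠ k : ℕ in atTop,
        L / 2 - L / 2 * (1 / (k : ℝ)) = L * ((k : ℝ) * ((k : ℝ) - 1) / 2) / (k : ℝ)^2 := by
      filter_upwards [eventually_ge_atTop 1] with k hk
      have hk0 : (k : ℝ) ≠ 0 := Nat.cast_ne_zero.mpr (by omega)
      field_simp
    have := (tendsto_const_nhds (x := L / 2)).sub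
      ((tendsto_const_nhds (x := L / 2)).mul tendsto_one_div_atTop_nhds_zero_nat)
    simp only [mul_zero, sub_zero] at this
    exact Tendsto.congr' heq this
  have hT2 : Tendsto (fun k : ℕ => (∑ p ∈ Finset.range k, (p : ℝ) * (b p - L)) / (k : ℝ)^2)
      atTop (nhds 0) := by
    have hg : Tendsto (fun k : ℕ => (∑ p ∈ Finset.range k, |b p - L|) / (k : ℝ))
        atTop (nhds 0) := by
      have h0 : Tendsto (fun p : ℕ => |b p - L|) atTop (nhds 0) := by
        have := (hb.sub_const L).abs
        simpa using this
      exact h0.cesaro.congr (fun n => by rw [inv_mul_eq_div])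
    rw [tendsto_zero_iff_abs_tendsto_zero]
    apply squeeze_zero (fun k => abs_nonneg _) ?_ hg
    intro k
    have hnum : |∑ p ∈ Finset.range k, (p : ℝ) * (b p - L)|
        ≤ (k : ℝ) * ∑ p ∈ Finset.range k, |b p - L| := by
      calc |∑ p ∈ Finset.range k, (p : ℝ) * (b p - L)|
          ≤ ∑ p ∈ Finset.range k, |(p : ℝ) * (b p - L)| :=
            Finset.abs_sum_le_sum_abs _ _
        _ = ∑ p ∈ Finset.range k, (p : ℝ) * |b p - L| := by
            apply Finset.sum_congr rfl
            intro p _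
            rw [abs_mul, Nat.abs_cast]
        _ ≤ ∑ p ∈ Finset.range k, (k : ℝ) * |b p - L| := by
            apply Finset.sum_le_sum
            intro p hp
            exact mul_le_mul_of_nonneg_right
              (Nat.cast_le.mpr (le_of_lt (Finset.mem_range.mp hp))) (abs_nonneg _)
        _ = (k : ℝ) * ∑ p ∈ Finset.range k, |b p - L| := by rw [Finset.mul_sum]
    rcases Nat.eq_zero_or_pos k with rfl | hk
    · simp
    · have hk0 : (0 : ℝ) < (k : ℝ) := by exact_mod_cast hk
      have h2 : |∑ p ∈ Finset.range k, (p : ℝ) * (b p - L)| / (k : ℝ)^2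
          ≤ ((k : ℝ) * ∑ p ∈ Finset.range k, |b p - L|) / (k : ℝ)^2 :=
        (div_le_div_iff_of_pos_right (by positivity)).mpr hnum
      have h3 : ((k : ℝ) * ∑ p ∈ Finset.range k, |b p - L|) / (k : ℝ)^2
          = (∑ p ∈ Finset.range k, |b p - L|) / (k : ℝ) := by
        field_simp
      rw [abs_div, abs_of_nonneg (by positivity : (0 : ℝ) ≤ (k : ℝ)^2)]
      rw [← h3] at *
      exact le_trans h2 (le_refl _)
  have := hT1.add hT2
  rw [add_zero] at this
  exact Tendsto.congr (fun k => (hdecomp k).symm) this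

lemma delta_tendsto (s : ℕ) :
    Tendsto (fun k : ℕ => delta s k / k) atTop (nhds ((2 : ℝ)⁻¹ ^ (s + 1))) := by
  induction s with
  | zero =>
    have heq : ∀ᶠ k : ℕ in atTop, 1 / 2 + 1 / (2 * (k : ℝ)) = delta 0 k / k := by
      filter_upwards [eventually_ge_atTop 1] with k hk
      have hk0 : (k : ℝ) ≠ 0 := Nat.cast_ne_zero.mpr (by omega)
      rw [delta, if_neg (by omega)]
      field_simp
    have h2 : Tendsto (fun k : ℕ => 1 / 2 + 1 / (2 * (k : ℝ))) atTop (nhds (1 / 2 + 0)) := by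
      apply Tendsto.add tendsto_const_nhds
      have h3 : Tendsto (fun k : ℕ => (1 : ℝ) / k) atTop (nhds 0) :=
        tendsto_one_div_atTop_nhds_zero_nat
      have := h3.const_mul (1 / 2 : ℝ)
      rw [mul_zero] at this
      apply this.congr
      intro k
      ring
    rw [add_zero] at h2
    have := Tendsto.congr' heq h2
    convert this using 2
    norm_num
  | succ s ihs =>
    set b : ℕ → ℝ := fun p => delta s p / p with hb
    have hpb : ∀ p : ℕ, (p : ℝ) * b p = delta s p := by
      intro p
      rcases Nat.eq_zero_or_pos p with rfl | hp
      · simp [delta_zero]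
      · rw [hb]
        field_simp
    have heq : ∀ k : ℕ, delta (s+1) k / k = (∑ p ∈ Finset.range k, (p : ℝ) * b p) / (k : ℝ)^2 := by
      intro k
      rw [show delta (s+1) k = (∑ p ∈ Finset.range k, delta s p) / k from rfl]
      rw [Finset.sum_congr rfl (fun p _ => (hpb p).symm), div_div, sq]
    have := weighted_cesaro ihs
    rw [show (2:ℝ)⁻¹ ^ (s + 1) / 2 = (2:ℝ)⁻¹ ^ (s + 1 + 1) from by ring] at this
    exact Tendsto.congr (fun k => (heq k).symm) this

/-- The average position of the `r`-th left-to-right maximum from the right of a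
random permutation of `{1,…,n}` is `n/2^r + o(n)`:
`(1/(n·n!)) Σ_{σ ∈ S_n} P_r(σ) → 2^{-r}`. -/
theorem average_rth_lr_max_position_permutations (r : ℕ) (hr : 1 ≤ r) :
    Tendsto (fun n : ℕ =>
        (∑ σ : Equiv.Perm (Fin n), (rthLRMaxPosFromRight r σ : ℝ)) /
          ((n : ℝ) * n.factorial))
      atTop (nhds ((2 : ℝ)⁻¹ ^ r)) := by
  obtain ⟨s, rfl⟩ : ∃ s, r = s + 1 := ⟨r - 1, by omega⟩
  have hsum : ∀ n : ℕ, (∑ σ : Equiv.Perm (Fin n), (rthLRMaxPosFromRight (s+1) σ : ℝ))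
      = (n.factorial : ℝ) * delta s n := by
    intro n
    have h1 : ∀ σ : Equiv.Perm (Fin n), (Nset σ).filter (· < n) = Nset σ := by
      intro σ
      apply Finset.filter_true_of_mem
      intro x hx
      obtain ⟨i, -, rfl⟩ := Finset.mem_image.mp hx
      exact i.isLt
    have h2 : (∑ σ : Equiv.Perm (Fin n), (rthLRMaxPosFromRight (s+1) σ : ℝ)) = SQ n n (s+1) := by
      rw [SQ]
      apply Finset.sum_congr rfl
      intro σ _
      rw [rth_eq_Qfun, h1 σ]
    rw [h2, SQ_eq n n s, Nat.min_self]
  have heq : ∀ᶠ n : ℕ in atTop,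
      delta s n / n = (∑ σ : Equiv.Perm (Fin n), (rthLRMaxPosFromRight (s+1) σ : ℝ))
        / ((n : ℝ) * n.factorial) := by
    filter_upwards [eventually_ge_atTop 1] with n hn
    rw [hsum n]
    have hn0 : (n : ℝ) ≠ 0 := Nat.cast_ne_zero.mpr (by omega)
    have hf0 : (n.factorial : ℝ) ≠ 0 := Nat.cast_ne_zero.mpr n.factorial_ne_zero
    field_simp
  exact Tendsto.congr' heq (delta_tendsto s)
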